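/- Fix any z ∈ 𝒜 and define φ : 𝒜 → ℝ by φ(a) = ∫₀¹ Σ_{j=1}^N (∂u_j/∂a_j)(z + r(a − z)) · (a_j − z_j) dr. Then φ is an α-potential function of the game with α = (a_δ²/2) · max over players i and action profiles a ∈ 𝒜 of Σ_{j=1}^N |(∂²u_i/∂a_i∂a_j)(a) − (∂²u_j/∂a_j∂a_i)(a)|; that is, for every player i, every a ∈ 𝒜 and every a_i' ∈ 𝒜_i, |[u_i(a) − u_i(a_i', a_{−i})] − [φ(a) − φ(a_i', a_{−i})]| ≤ α. -/

import Mathlib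

open Function MeasureTheory

/-- Partial derivative of `f : ℝ^N → ℝ` with respect to coordinate `j` at the point `a`. -/
noncomputable def pd {N : ℕ} (j : Fin N) (f : (Fin N → ℝ) → ℝ) (a : Fin N → ℝ) : ℝ :=
  deriv (fun t => f (Function.update a j t)) (a j)

/-- standard basis vector -/
noncomputable def E {N : ℕ} (j : Fin N) : Fin N → ℝ := Pi.single j 1

lemma update_eq_add_smul {N : ℕ} (x : Fin N → ℝ) (j : Fin N) (t : ℝ) :
    Function.update x j t = x + (t - x j) • E j := by
  funext k
  rcases eq_or_ne k j with h | h
  · subst h; simp [E]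
  · simp [Function.update_of_ne h, E, Pi.single_eq_of_ne h]

lemma pd_eq_fderiv {N : ℕ} (j : Fin N) (f : (Fin N → ℝ) → ℝ) (x : Fin N → ℝ)
    (hf : DifferentiableAt ℝ f x) :
    pd j f x = fderiv ℝ f x (E j) := by
  have hc : HasDerivAt (fun t : ℝ => Function.update x j t) (E j) (x j) := by
    have h : (fun t : ℝ => Function.update x j t)
        = fun t => x + (t - x j) • E j := funext (update_eq_add_smul x j)
    rw [h]
    simpa using (((hasDerivAt_id (x j)).sub_const (x j)).smul_const (E (N := N) j)).const_add x
  have h2 : HasDerivAt (fun t => f (Function.update x j t)) (fderiv ℝ f x (E j)) (x j) := by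
    have h3 := hf.hasFDerivAt
    rw [show x = Function.update x j (x j) from (Function.update_eq_self j x).symm] at h3
    have h4 := h3.comp_hasDerivAt (x j) hc
    simp only [Function.update_eq_self] at h4
    exact h4
  exact h2.deriv

lemma contDiff_fderiv_apply {N : ℕ} {f : (Fin N → ℝ) → ℝ} (hf : ContDiff ℝ 2 f)
    (v : Fin N → ℝ) : ContDiff ℝ 1 (fun x => fderiv ℝ f x v) :=
  (hf.fderiv_right (by norm_num)).clm_apply contDiff_const

lemma continuous_fderiv_apply {N : ℕ} {f : (Fin N → ℝ) → ℝ} (hf : ContDiff ℝ 1 f)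
    (v : Fin N → ℝ) : Continuous (fun x => fderiv ℝ f x v) :=
  (((hf.fderiv_right (m := 0) (by norm_num)).clm_apply contDiff_const)).continuous

lemma fderiv_apply_eq_sum {N : ℕ} {f : (Fin N → ℝ) → ℝ} {x : Fin N → ℝ}
    (v : Fin N → ℝ) :
    fderiv ℝ f x v = ∑ j, v j * fderiv ℝ f x (E j) := by
  have hv : v = ∑ j, v j • (E j : Fin N → ℝ) := by
    funext k
    simp [E, Pi.single_apply, Finset.sum_apply]
  conv_lhs => rw [hv]
  rw [map_sum]
  simp [smul_eq_mul]

lemma swap_01 (f : ℝ → ℝ → ℝ) (hf : Continuous (Function.uncurry f)) :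
    (∫ r in (0:ℝ)..1, ∫ t in (0:ℝ)..1, f r t)
      = ∫ t in (0:ℝ)..1, ∫ r in (0:ℝ)..1, f r t := by
  have h01 : (0:ℝ) ≤ 1 := zero_le_one
  have hint : Integrable (Function.uncurry f)
      ((volume.restrict (Set.Ioc (0:ℝ) 1)).prod (volume.restrict (Set.Ioc (0:ℝ) 1))) := by
    rw [Measure.prod_restrict]
    exact ((hf.continuousOn).integrableOn_compact (isCompact_Icc.prod isCompact_Icc)).mono_set
      (Set.prod_mono Set.Ioc_subset_Icc_self Set.Ioc_subset_Icc_self)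
  have := MeasureTheory.integral_integral_swap hint
  simp only [intervalIntegral.integral_of_le h01]
  exact this

set_option maxHeartbeats 1000000 in
theorem alpha_potential_characterization
    {N : ℕ} (hN : 0 < N)
    (lo hi : Fin N → ℝ) (hlohi : ∀ i, lo i ≤ hi i)
    (u : Fin N → (Fin N → ℝ) → ℝ) (hu : ∀ i, ContDiff ℝ 2 (u i))
    (A : Set (Fin N → ℝ))
    (hA : A = Set.univ.pi fun i => Set.Icc (lo i) (hi i))
    (aδ : ℝ)
    (haδ : aδ = sSup {d : ℝ | ∃ i : Fin N, ∃ x ∈ Set.Icc (lo i) (hi i),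
      ∃ y ∈ Set.Icc (lo i) (hi i), d = |x - y|})
    (z : Fin N → ℝ) (hz : z ∈ A)
    (φ : (Fin N → ℝ) → ℝ)
    (hφ : ∀ a, φ a =
      ∫ r in (0:ℝ)..1, ∑ j, pd j (u j) (fun k => z k + r * (a k - z k)) * (a j - z j))
    (α : ℝ)
    (hα : α = aδ ^ 2 / 2 *
      sSup {x : ℝ | ∃ i : Fin N, ∃ a ∈ A,
        x = ∑ j, |pd j (pd i (u i)) a - pd i (pd j (u j)) a|}) :
    ∀ i : Fin N, ∀ a ∈ A, ∀ ai' ∈ Set.Icc (lo i) (hi i),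
      |(u i a - u i (Function.update a i ai')) - (φ a - φ (Function.update a i ai'))| ≤ α := by
  classical
  intro i a ha ai' hai'
  haveI : Nonempty (Fin N) := ⟨⟨0, hN⟩⟩
  -- first derivatives
  set F : Fin N → (Fin N → ℝ) → ℝ := fun j x => fderiv ℝ (u j) x (E j) with hFdef
  have hudiff : ∀ j, Differentiable ℝ (u j) := fun j => (hu j).differentiable (by norm_num)
  have hFc1 : ∀ j, ContDiff ℝ 1 (F j) := fun j => contDiff_fderiv_apply (hu j) (E j)
  have hFdiff : ∀ j, Differentiable ℝ (F j) := fun j => (hFc1 j).differentiable one_ne_zero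
  have hFcont : ∀ j, Continuous (F j) := fun j => (hFc1 j).continuous
  have hpdF : ∀ j x, pd j (u j) x = F j x := fun j x => pd_eq_fderiv j (u j) x (hudiff j x)
  -- second derivatives
  set G : Fin N → Fin N → (Fin N → ℝ) → ℝ := fun k j x => fderiv ℝ (F j) x (E k) with hGdef
  have hGcont : ∀ k j, Continuous (G k j) := fun k j => continuous_fderiv_apply (hFc1 j) (E k)
  have hpdG : ∀ k j x, pd k (F j) x = G k j x :=
    fun k j x => pd_eq_fderiv k (F j) x (hFdiff j x)
  have h_pdpd : ∀ (i' : Fin N) (x : Fin N → ℝ),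
      (∑ j, |pd j (pd i' (u i')) x - pd i' (pd j (u j)) x|)
        = ∑ j, |G j i' x - G i' j x| := by
    intro i' x
    refine Finset.sum_congr rfl fun j _ => ?_
    have h1 : pd i' (u i') = F i' := funext (hpdF i')
    have h2 : pd j (u j) = F j := funext (hpdF j)
    rw [h1, h2, hpdG j i' x, hpdG i' j x]
  -- membership facts
  have haIcc : ∀ k, a k ∈ Set.Icc (lo k) (hi k) := by
    rw [hA] at ha; exact fun k => ha k (Set.mem_univ k)
  have hzIcc : ∀ k, z k ∈ Set.Icc (lo k) (hi k) := by
    rw [hA] at hz; exact fun k => hz k (Set.mem_univ k)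
  -- aδ facts
  have hDbdd : BddAbove {d : ℝ | ∃ i : Fin N, ∃ x ∈ Set.Icc (lo i) (hi i),
      ∃ y ∈ Set.Icc (lo i) (hi i), d = |x - y|} := by
    refine ⟨Finset.univ.sup' Finset.univ_nonempty (fun k => hi k - lo k), ?_⟩
    rintro d ⟨k, x, hx, y, hy, rfl⟩
    have h1 : |x - y| ≤ hi k - lo k := by
      rw [abs_sub_le_iff]
      constructor <;> [linarith [hx.1, hx.2, hy.1, hy.2]; linarith [hx.1, hx.2, hy.1, hy.2]]
    exact h1.trans (Finset.le_sup' (fun k => hi k - lo k) (Finset.mem_univ k))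
  have habs_le : ∀ (k : Fin N) (x y : ℝ), x ∈ Set.Icc (lo k) (hi k) →
      y ∈ Set.Icc (lo k) (hi k) → |x - y| ≤ aδ := by
    intro k x y hx hy
    rw [haδ]
    exact le_csSup hDbdd ⟨k, x, hx, y, hy, rfl⟩
  have haδ0 : 0 ≤ aδ := by
    have := habs_le i (lo i) (lo i) ⟨le_rfl, hlohi i⟩ ⟨le_rfl, hlohi i⟩
    simpa using this
  -- M facts
  set M : ℝ := sSup {x : ℝ | ∃ i : Fin N, ∃ a ∈ A,
      x = ∑ j, |pd j (pd i (u i)) a - pd i (pd j (u j)) a|} with hMdef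
  have hAcomp : IsCompact A := by
    rw [hA]; exact isCompact_univ_pi fun k => isCompact_Icc
  have hSbdd : BddAbove {x : ℝ | ∃ i : Fin N, ∃ a ∈ A,
      x = ∑ j, |pd j (pd i (u i)) a - pd i (pd j (u j)) a|} := by
    have hcont : ∀ i' : Fin N, Continuous fun x => ∑ j, |G j i' x - G i' j x| := by
      intro i'
      exact continuous_finset_sum _ fun j _ => ((hGcont j i').sub (hGcont i' j)).abs
    choose C hC using fun i' : Fin N =>
      hAcomp.exists_bound_of_continuousOn (hcont i').continuousOn
    refine ⟨Finset.univ.sup' Finset.univ_nonempty C, ?_⟩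
    rintro s ⟨i', x, hx, rfl⟩
    rw [h_pdpd]
    calc (∑ j, |G j i' x - G i' j x|) ≤ ‖∑ j, |G j i' x - G i' j x|‖ := le_abs_self _
      _ ≤ C i' := hC i' x hx
      _ ≤ _ := Finset.le_sup' C (Finset.mem_univ i')
  have hsum_le_M : ∀ x ∈ A, (∑ j, |G j i x - G i j x|) ≤ M := by
    intro x hx
    exact le_csSup hSbdd ⟨i, x, hx, (h_pdpd i x).symm⟩
  have hM0 : 0 ≤ M := by
    have h1 : (0:ℝ) ≤ ∑ j, |G j i z - G i j z| :=
      Finset.sum_nonneg fun j _ => abs_nonneg _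
    exact h1.trans (hsum_le_M z hz)
  -- geometric setup
  set d : ℝ := a i - ai' with hddef
  set b : Fin N → ℝ := Function.update a i ai' with hbdef
  set p : ℝ → (Fin N → ℝ) := fun t => a + ((t - 1) * d) • E i with hpdef
  have hpj : ∀ t j, p t j = a j + ((t - 1) * d) * E i j := by
    intro t j; simp [hpdef]
  have hp1 : p 1 = a := by funext k; simp [hpdef]
  have hp0 : p 0 = b := by
    rw [hbdef, update_eq_add_smul]
    funext k
    simp only [hpdef, hddef, Pi.add_apply, Pi.smul_apply, smul_eq_mul]
    ring
  have hpmemIcc : ∀ t ∈ Set.Icc (0:ℝ) 1, ∀ k, p t k ∈ Set.Icc (lo k) (hi k) := by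
    intro t ht k
    rcases eq_or_ne k i with h | h
    · subst h
      rw [hpj]
      simp only [E, Pi.single_eq_same, mul_one]
      constructor
      · nlinarith [haIcc k, hai'.1, hai'.2, ht.1, ht.2, (haIcc k).1, (haIcc k).2]
      · nlinarith [hai'.1, hai'.2, ht.1, ht.2, (haIcc k).1, (haIcc k).2]
    · rw [hpj]
      simp only [E, Pi.single_eq_of_ne h, mul_zero, add_zero]
      exact haIcc k
  have hpmem : ∀ t ∈ Set.Icc (0:ℝ) 1, p t ∈ A := by
    intro t ht; rw [hA]; exact fun k _ => hpmemIcc t ht k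
  set q : ℝ → ℝ → (Fin N → ℝ) := fun r t => z + r • (p t - z) with hqdef
  have hqk : ∀ r t k, q r t k = z k + r * (p t k - z k) := by
    intro r t k; simp [hqdef]
  have hq1 : ∀ t, q 1 t = p t := by intro t; funext k; simp [hqk]
  have hqmem : ∀ r ∈ Set.Icc (0:ℝ) 1, ∀ t ∈ Set.Icc (0:ℝ) 1, q r t ∈ A := by
    intro r hr t ht
    rw [hA]
    intro k _
    have h1 := hpmemIcc t ht k
    have h2 := hzIcc k
    rw [hqk]
    constructor
    · nlinarith [h1.1, h1.2, h2.1, h2.2, hr.1, hr.2]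
    · nlinarith [h1.1, h1.2, h2.1, h2.2, hr.1, hr.2]
  -- continuity
  have hpcont : Continuous p := by
    apply continuous_const.add
    exact (((continuous_id.sub continuous_const).mul continuous_const).smul continuous_const)
  have hqcont : Continuous fun rt : ℝ × ℝ => q rt.1 rt.2 := by
    apply continuous_const.add
    exact continuous_fst.smul ((hpcont.comp continuous_snd).sub continuous_const)
  -- derivatives of paths
  have hp' : ∀ t : ℝ, HasDerivAt p (d • E i) t := by
    intro t
    have h := ((((hasDerivAt_id t).sub_const 1).mul_const d).smul_const (E (N := N) i)).const_add a
    rw [one_mul] at h; exact h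
  have hqt' : ∀ r t : ℝ, HasDerivAt (fun t => q r t) ((r * d) • E i) t := by
    intro r t
    have h := (((hp' t).sub_const z).const_smul r).const_add z
    rw [smul_smul] at h
    exact h
  have hqr' : ∀ t r : ℝ, HasDerivAt (fun r => q r t) (p t - z) r := by
    intro t r
    have h := ((hasDerivAt_id r).smul_const (p t - z)).const_add z
    rw [one_smul] at h; exact h
  have hptj' : ∀ (j : Fin N) (t : ℝ), HasDerivAt (fun t => p t j) (d * E i j) t := by
    intro j t
    have h := (ContinuousLinearMap.proj (R := ℝ) (φ := fun _ : Fin N => ℝ) j).hasFDerivAt.comp_hasDerivAt t (hp' t)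
    simp at h; exact h
  -- step 1 : Δu
  have hstep1 : ∫ t in (0:ℝ)..1, F i (p t) * d = u i a - u i b := by
    have hder : ∀ t ∈ Set.uIcc (0:ℝ) 1, HasDerivAt (fun t => u i (p t)) (F i (p t) * d) t := by
      intro t _
      have h := ((hudiff i) (p t)).hasFDerivAt.comp_hasDerivAt t (hp' t)
      have heq : fderiv ℝ (u i) (p t) (d • E i) = F i (p t) * d := by
        rw [(fderiv ℝ (u i) (p t)).map_smul]; simp [hFdef, smul_eq_mul, mul_comm]
      rw [heq] at h
      exact h
    have hcont : Continuous fun t => F i (p t) * d := ((hFcont i).comp hpcont).mul continuous_const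
    rw [intervalIntegral.integral_eq_sub_of_hasDerivAt hder (hcont.intervalIntegrable 0 1),
      hp1, hp0]
  -- the double-integral integrand
  set W : ℝ → ℝ → ℝ := fun r t =>
    (∑ j, (r * d) * G i j (q r t) * (p t j - z j)) + F i (q r t) * d with hWdef
  have hsum_single : ∀ g : Fin N → ℝ, (∑ j, g j * (d * E i j)) = g i * d := by
    intro g
    rw [Finset.sum_eq_single i]
    · simp [E]
    · intro j _ hj; simp [E, Pi.single_eq_of_ne hj]
    · simp
  set Ψ : ℝ → ℝ → ℝ := fun r t => ∑ j, F j (q r t) * (p t j - z j) with hΨdef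
  have hΨt' : ∀ r t : ℝ, HasDerivAt (fun t => Ψ r t) (W r t) t := by
    intro r t
    have hterm : ∀ j : Fin N, HasDerivAt (fun t => F j (q r t) * (p t j - z j))
        ((r * d) * G i j (q r t) * (p t j - z j) + F j (q r t) * (d * E i j)) t := by
      intro j
      have h1 : HasDerivAt (fun t => F j (q r t)) ((r * d) * G i j (q r t)) t := by
        have h := ((hFdiff j) (q r t)).hasFDerivAt.comp_hasDerivAt t (hqt' r t)
        have heq : fderiv ℝ (F j) (q r t) ((r * d) • E i) = (r * d) * G i j (q r t) := by
          rw [(fderiv ℝ (F j) (q r t)).map_smul]; simp [hGdef, smul_eq_mul]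
        rw [heq] at h; exact h
      have h2 : HasDerivAt (fun t => p t j - z j) (d * E i j) t := (hptj' j t).sub_const (z j)
      exact h1.mul h2
    have h := HasDerivAt.fun_sum (fun j (_ : j ∈ Finset.univ) => hterm j)
    have heq : (∑ j, ((r * d) * G i j (q r t) * (p t j - z j) + F j (q r t) * (d * E i j)))
        = W r t := by
      rw [Finset.sum_add_distrib, hsum_single (fun j => F j (q r t))]
    rw [heq] at h
    exact h
  have hWcont : Continuous (Function.uncurry W) := by
    have h : Function.uncurry W = fun rt : ℝ × ℝ =>
        (∑ j, (rt.1 * d) * G i j (q rt.1 rt.2) * (p rt.2 j - z j)) + F i (q rt.1 rt.2) * d := rfl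
    rw [h]
    refine Continuous.add ?_ (((hFcont i).comp hqcont).mul continuous_const)
    apply continuous_finset_sum
    intro j _
    exact ((continuous_fst.mul continuous_const).mul ((hGcont i j).comp hqcont)).mul
      (((continuous_apply j).comp (hpcont.comp continuous_snd)).sub continuous_const)
  have hstep2 : ∀ r : ℝ, ∫ t in (0:ℝ)..1, W r t = Ψ r 1 - Ψ r 0 := by
    intro r
    have hcont : Continuous fun t => W r t :=
      hWcont.comp (continuous_const.prodMk continuous_id)
    exact intervalIntegral.integral_eq_sub_of_hasDerivAt
      (fun t _ => hΨt' r t) (hcont.intervalIntegrable 0 1)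
  -- Δφ as a double integral
  have hφgen : ∀ y : Fin N → ℝ,
      φ y = ∫ r in (0:ℝ)..1, ∑ j, F j (z + r • (y - z)) * (y j - z j) := by
    intro y
    rw [hφ y]
    apply intervalIntegral.integral_congr
    intro r _
    refine Finset.sum_congr rfl fun j _ => ?_
    have hx : (fun k => z k + r * (y k - z k)) = z + r • (y - z) := by
      funext k; simp
    rw [hx, hpdF]
  have hΨa : ∀ r : ℝ, Ψ r 1 = ∑ j, F j (z + r • (a - z)) * (a j - z j) := by
    intro r
    show (∑ j, F j (z + r • (p 1 - z)) * (p 1 j - z j)) = _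
    rw [hp1]
  have hΨb : ∀ r : ℝ, Ψ r 0 = ∑ j, F j (z + r • (b - z)) * (b j - z j) := by
    intro r
    show (∑ j, F j (z + r • (p 0 - z)) * (p 0 j - z j)) = _
    rw [hp0]
  have hΨcont : Continuous (Function.uncurry Ψ) := by
    have h : Function.uncurry Ψ = fun rt : ℝ × ℝ =>
        ∑ j, F j (q rt.1 rt.2) * (p rt.2 j - z j) := rfl
    rw [h]
    apply continuous_finset_sum
    intro j _
    exact ((hFcont j).comp hqcont).mul
      (((continuous_apply j).comp (hpcont.comp continuous_snd)).sub continuous_const)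
  have hΔφ : φ a - φ b = ∫ r in (0:ℝ)..1, ∫ t in (0:ℝ)..1, W r t := by
    rw [hφgen a, hφgen b]
    have hi1 : IntervalIntegrable (fun r => Ψ r 1) volume 0 1 :=
      (hΨcont.comp (continuous_id.prodMk continuous_const)).intervalIntegrable 0 1
    have hi0 : IntervalIntegrable (fun r => Ψ r 0) volume 0 1 :=
      (hΨcont.comp (continuous_id.prodMk continuous_const)).intervalIntegrable 0 1
    rw [show (∫ r in (0:ℝ)..1, ∑ j, F j (z + r • (a - z)) * (a j - z j))
        = ∫ r in (0:ℝ)..1, Ψ r 1 from intervalIntegral.integral_congr fun r _ => (hΨa r).symm]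
    rw [show (∫ r in (0:ℝ)..1, ∑ j, F j (z + r • (b - z)) * (b j - z j))
        = ∫ r in (0:ℝ)..1, Ψ r 0 from intervalIntegral.integral_congr fun r _ => (hΨb r).symm]
    rw [← intervalIntegral.integral_sub hi1 hi0]
    exact intervalIntegral.integral_congr fun r _ => (hstep2 r).symm
  -- step 4 : r-FTC
  have hstep4 : ∀ t : ℝ, (∫ r in (0:ℝ)..1,
      (F i (q r t) + r * (∑ j, (p t j - z j) * G j i (q r t)))) = F i (p t) := by
    intro t
    have hcq : Continuous fun r => q r t :=
      hqcont.comp (continuous_id.prodMk continuous_const)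
    have hder : ∀ r ∈ Set.uIcc (0:ℝ) 1, HasDerivAt (fun r => r * F i (q r t))
        (F i (q r t) + r * (∑ j, (p t j - z j) * G j i (q r t))) r := by
      intro r _
      have h1 : HasDerivAt (fun r => F i (q r t)) (∑ j, (p t j - z j) * G j i (q r t)) r := by
        have h := ((hFdiff i) (q r t)).hasFDerivAt.comp_hasDerivAt r (hqr' t r)
        have heq : fderiv ℝ (F i) (q r t) (p t - z)
            = ∑ j, (p t j - z j) * G j i (q r t) := by
          rw [fderiv_apply_eq_sum (p t - z)]
          refine Finset.sum_congr rfl fun j _ => ?_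
          simp [hGdef]
        rw [heq] at h; exact h
      have h2 := (hasDerivAt_id r).fun_mul h1
      simpa using h2
    have hcont : Continuous fun r =>
        F i (q r t) + r * (∑ j, (p t j - z j) * G j i (q r t)) :=
      ((hFcont i).comp hcq).add (continuous_id.mul (continuous_finset_sum _ fun j _ =>
        continuous_const.mul ((hGcont j i).comp hcq)))
    rw [intervalIntegral.integral_eq_sub_of_hasDerivAt hder (hcont.intervalIntegrable 0 1)]
    simp [hq1 t]
  -- step 5 : evaluate the inner integral
  have hstep5 : ∀ t : ℝ, (∫ r in (0:ℝ)..1, W r t)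
      = F i (p t) * d - d * ∫ r in (0:ℝ)..1,
          r * (∑ j, (p t j - z j) * (G j i (q r t) - G i j (q r t))) := by
    intro t
    have hcq : Continuous fun r => q r t :=
      hqcont.comp (continuous_id.prodMk continuous_const)
    have hc1 : Continuous fun r =>
        d * (F i (q r t) + r * (∑ j, (p t j - z j) * G j i (q r t))) :=
      continuous_const.mul (((hFcont i).comp hcq).add
        (continuous_id.mul (continuous_finset_sum _ fun j _ =>
          continuous_const.mul ((hGcont j i).comp hcq))))
    have hc2 : Continuous fun r =>
        d * (r * (∑ j, (p t j - z j) * (G j i (q r t) - G i j (q r t)))) :=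
      continuous_const.mul (continuous_id.mul (continuous_finset_sum _ fun j _ =>
        continuous_const.mul (((hGcont j i).comp hcq).sub ((hGcont i j).comp hcq))))
    have hW_eq : ∀ r : ℝ, W r t
        = d * (F i (q r t) + r * (∑ j, (p t j - z j) * G j i (q r t)))
          - d * (r * (∑ j, (p t j - z j) * (G j i (q r t) - G i j (q r t)))) := by
      intro r
      show (∑ j, (r * d) * G i j (q r t) * (p t j - z j)) + F i (q r t) * d = _
      simp only [mul_add, Finset.mul_sum]
      rw [show (∑ j, (r * d) * G i j (q r t) * (p t j - z j))
          = ∑ j, (d * (r * ((p t j - z j) * G j i (q r t)))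
              - d * (r * ((p t j - z j) * (G j i (q r t) - G i j (q r t))))) from
          Finset.sum_congr rfl fun j _ => by ring]
      rw [Finset.sum_sub_distrib]
      ring
    calc (∫ r in (0:ℝ)..1, W r t)
        = ∫ r in (0:ℝ)..1,
            (d * (F i (q r t) + r * (∑ j, (p t j - z j) * G j i (q r t)))
              - d * (r * (∑ j, (p t j - z j) * (G j i (q r t) - G i j (q r t))))) :=
          intervalIntegral.integral_congr fun r _ => hW_eq r
      _ = (∫ r in (0:ℝ)..1, d * (F i (q r t) + r * (∑ j, (p t j - z j) * G j i (q r t))))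
            - ∫ r in (0:ℝ)..1,
                d * (r * (∑ j, (p t j - z j) * (G j i (q r t) - G i j (q r t)))) :=
          intervalIntegral.integral_sub (hc1.intervalIntegrable 0 1) (hc2.intervalIntegrable 0 1)
      _ = d * (∫ r in (0:ℝ)..1, (F i (q r t) + r * (∑ j, (p t j - z j) * G j i (q r t))))
            - d * ∫ r in (0:ℝ)..1,
                r * (∑ j, (p t j - z j) * (G j i (q r t) - G i j (q r t))) := by
          rw [intervalIntegral.integral_const_mul, intervalIntegral.integral_const_mul]
      _ = _ := by rw [hstep4 t]; ring
  -- assemble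
  have hintA : IntervalIntegrable (fun t => F i (p t) * d) volume 0 1 :=
    (((hFcont i).comp hpcont).mul continuous_const).intervalIntegrable 0 1
  have hintB : IntervalIntegrable (fun t => ∫ r in (0:ℝ)..1, W r t) volume 0 1 := by
    have hc : Continuous fun t => ∫ r in (0:ℝ)..1, W r t := by
      apply intervalIntegral.continuous_parametric_intervalIntegral_of_continuous'
        (f := fun t r => W r t)
      exact hWcont.comp continuous_swap
    exact hc.intervalIntegrable 0 1
  have hkey : u i a - u i b - (φ a - φ b)
      = ∫ t in (0:ℝ)..1, (d * ∫ r in (0:ℝ)..1,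
          r * (∑ j, (p t j - z j) * (G j i (q r t) - G i j (q r t)))) := by
    rw [← hstep1, hΔφ, swap_01 W hWcont, ← intervalIntegral.integral_sub hintA hintB]
    apply intervalIntegral.integral_congr
    intro t _
    simp only [hstep5 t]; ring
  rw [hkey, hα]
  have hbound : ∀ t ∈ Set.uIoc (0:ℝ) 1,
      ‖d * ∫ r in (0:ℝ)..1,
          r * (∑ j, (p t j - z j) * (G j i (q r t) - G i j (q r t)))‖ ≤ aδ ^ 2 / 2 * M := by
    intro t ht
    have ht' : t ∈ Set.Icc (0:ℝ) 1 := by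
      rw [Set.uIoc_of_le zero_le_one] at ht
      exact Set.Ioc_subset_Icc_self ht
    have hcq2 : Continuous fun r =>
        r * (∑ j, (p t j - z j) * (G j i (q r t) - G i j (q r t))) := by
      have hcq : Continuous fun r => q r t :=
        hqcont.comp (continuous_id.prodMk continuous_const)
      exact continuous_id.mul (continuous_finset_sum _ fun j _ =>
        continuous_const.mul (((hGcont j i).comp hcq).sub ((hGcont i j).comp hcq)))
    have hinner : |∫ r in (0:ℝ)..1,
        r * (∑ j, (p t j - z j) * (G j i (q r t) - G i j (q r t)))| ≤ aδ * M / 2 := by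
      have h1 := intervalIntegral.abs_integral_le_integral_abs (f := fun r =>
        r * (∑ j, (p t j - z j) * (G j i (q r t) - G i j (q r t))))
        (a := 0) (b := 1) (μ := MeasureTheory.volume) zero_le_one
      have h2 : (∫ r in (0:ℝ)..1,
          |r * (∑ j, (p t j - z j) * (G j i (q r t) - G i j (q r t)))|)
          ≤ ∫ r in (0:ℝ)..1, r * (aδ * M) := by
        apply intervalIntegral.integral_mono_on zero_le_one
          (hcq2.abs.intervalIntegrable 0 1)
          ((continuous_id.mul continuous_const).intervalIntegrable 0 1)
        intro r hr
        rw [abs_mul, abs_of_nonneg hr.1]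
        apply mul_le_mul_of_nonneg_left ?_ hr.1
        calc |∑ j, (p t j - z j) * (G j i (q r t) - G i j (q r t))|
            ≤ ∑ j, |(p t j - z j) * (G j i (q r t) - G i j (q r t))| :=
              Finset.abs_sum_le_sum_abs _ _
          _ ≤ ∑ j, aδ * |G j i (q r t) - G i j (q r t)| := by
              refine Finset.sum_le_sum fun j _ => ?_
              rw [abs_mul]
              exact mul_le_mul_of_nonneg_right
                (habs_le j _ _ (hpmemIcc t ht' j) (hzIcc j)) (abs_nonneg _)
          _ = aδ * ∑ j, |G j i (q r t) - G i j (q r t)| := by rw [Finset.mul_sum]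
          _ ≤ aδ * M := mul_le_mul_of_nonneg_left (hsum_le_M _ (hqmem r hr t ht')) haδ0
      have h3 : (∫ r in (0:ℝ)..1, r * (aδ * M)) = aδ * M / 2 := by
        rw [intervalIntegral.integral_mul_const, integral_id]
        ring
      linarith [h1, h2, h3.le, h3.ge]
    rw [Real.norm_eq_abs, abs_mul]
    have hd : |d| ≤ aδ := habs_le i (a i) ai' (haIcc i) hai'
    calc |d| * |∫ r in (0:ℝ)..1,
          r * (∑ j, (p t j - z j) * (G j i (q r t) - G i j (q r t)))|
        ≤ aδ * (aδ * M / 2) := by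
          apply mul_le_mul hd hinner (abs_nonneg _) haδ0
      _ = aδ ^ 2 / 2 * M := by ring
  calc |∫ t in (0:ℝ)..1, (d * ∫ r in (0:ℝ)..1,
        r * (∑ j, (p t j - z j) * (G j i (q r t) - G i j (q r t))))|
      ≤ aδ ^ 2 / 2 * M * |1 - 0| :=
        intervalIntegral.norm_integral_le_of_norm_le_const hbound
    _ = aδ ^ 2 / 2 * M := by norm_num
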